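/- Let K and L be simplicial sets each with finitely many nondegenerate simplices. Then the product simplicial set K × L also has finitely many nondegenerate simplices, and χ(K × L) = χ(K) · χ(L), where χ denotes the alternating sum of the numbers of nondegenerate simplices. -/

import Mathlib

open CategoryTheory Simplicial Opposite

/-- A simplex of a simplicial set is nondegenerate if it is not in the image of any
degeneracy map. (Every 0-simplex is nondegenerate.) -/
def SSet.Nondeg (K : SSet) : (n : ℕ) → K _⦋n⦌ → Prop
| 0, _ => True
| n + 1, σ => ¬ ∃ (i : Fin (n + 1)) (τ : K _⦋n⦌), σ = K.map (SimplexCategory.σ i).op τ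

/-- A simplicial set has finitely many nondegenerate simplices. -/
def SSet.FinNondeg (K : SSet) : Prop :=
  (∀ n : ℕ, {σ : K _⦋n⦌ | K.Nondeg n σ}.Finite) ∧
    ∃ N : ℕ, ∀ n ≥ N, ∀ σ : K _⦋n⦌, ¬ K.Nondeg n σ

/-- The initial vertex of an `n`-simplex, induced by `[0] → [n]`, `0 ↦ 0`. -/
def SSet.initVertex (K : SSet) (n : ℕ) (σ : K _⦋n⦌) : K _⦋0⦌ :=
  K.map (SimplexCategory.mkHom (OrderHom.const _ (0 : Fin (n + 1)))).op σ

/-- The combinatorial Euler characteristic: the alternating sum of the numbers of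
nondegenerate simplices. -/
noncomputable def SSet.chi (K : SSet) : ℤ :=
  ∑ᶠ n : ℕ, (-1 : ℤ) ^ n * (Nat.card {σ : K.obj (op (SimplexCategory.mk n)) // K.Nondeg n σ} : ℤ)

/-- The Möbius function of a simplicial set at a vertex `x`: the alternating sum of the
numbers of nondegenerate simplices with initial vertex `x`. -/
noncomputable def SSet.mob (K : SSet) (x : K _⦋0⦌) : ℤ :=
  ∑ᶠ n : ℕ, (-1 : ℤ) ^ n *
    (Nat.card {σ : K.obj (op (SimplexCategory.mk n)) // K.Nondeg n σ ∧ K.initVertex n σ = x} : ℤ)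
open Limits


universe u

namespace ChiProd
open SimplexCategory Limits Polynomial

open SimplexCategory Limits

instance (a b : SimplexCategory) : Finite (a ⟶ b) := by
  refine Finite.of_injective (fun f => (f.toOrderHom : Fin (a.len + 1) → Fin (b.len + 1))) ?_
  intro f g h
  exact SimplexCategory.Hom.ext _ _ (OrderHom.ext _ _ h)

/-- Existence part of Eilenberg–Zilber. -/
lemma exists_ez (X : SSet.{u}) (n : ℕ) (x : X _⦋n⦌) :
    ∃ (p : ℕ) (_ : p ≤ n) (α : (⦋n⦌ : SimplexCategory) ⟶ ⦋p⦌) (_ : Epi α) (y : X _⦋p⦌),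
      X.Nondeg p y ∧ x = X.map α.op y := by
  induction n with
  | zero => exact ⟨0, le_refl 0, 𝟙 _, inferInstance, x, trivial, by simp⟩
  | succ n ih =>
    by_cases h : X.Nondeg (n + 1) x
    · exact ⟨n + 1, le_refl _, 𝟙 _, inferInstance, x, h, by simp⟩
    · rw [SSet.Nondeg, not_not] at h
      obtain ⟨i, τ, rfl⟩ := h
      obtain ⟨p, hpn, α, hα, y, hy, rfl⟩ := ih τ
      refine ⟨p, hpn.trans (Nat.le_succ n), SimplexCategory.σ i ≫ α, epi_comp _ _, y, hy, ?_⟩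
      rw [op_comp, FunctorToTypes.map_comp_apply]

/-- If a nondegenerate simplex factors through `γ`, then `γ` is injective. -/
lemma injective_of_nondeg (X : SSet.{u}) {p q : ℕ} (x : X _⦋p⦌) (hx : X.Nondeg p x)
    (γ : (⦋p⦌ : SimplexCategory) ⟶ ⦋q⦌) (z : X _⦋q⦌) (hz : x = X.map γ.op z) :
    Function.Injective γ.toOrderHom := by
  cases p with
  | zero =>
    intro a b _
    have ha : (a : ℕ) < 1 := a.isLt
    have hb : (b : ℕ) < 1 := b.isLt
    exact Fin.ext (by omega)
  | succ p =>
    by_contra hinj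
    obtain ⟨i, γ', hγ⟩ := eq_σ_comp_of_not_injective γ hinj
    exact hx ⟨i, X.map γ'.op z, by rw [hz, hγ, op_comp, FunctorToTypes.map_comp_apply]⟩

/-- Sections of a surjective monotone map through a chosen point. -/
lemma exists_section {n p : ℕ} (α : (⦋n⦌ : SimplexCategory) ⟶ ⦋p⦌)
    (hs : Function.Surjective α.toOrderHom) (i : Fin (n + 1)) :
    ∃ s : (⦋p⦌ : SimplexCategory) ⟶ ⦋n⦌, s ≫ α = 𝟙 _ ∧
      s.toOrderHom (α.toOrderHom i) = i := by
  classical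
  set g : Fin (p + 1) → Fin (n + 1) :=
    fun j => if j = α.toOrderHom i then i else (hs j).choose with hg
  have hαg : ∀ j, α.toOrderHom (g j) = j := by
    intro j
    by_cases h : j = α.toOrderHom i
    · simp [hg, h]
    · simp only [hg, if_neg h]
      exact (hs j).choose_spec
  have hmono : Monotone g := by
    intro j j' hjj'
    rcases eq_or_lt_of_le hjj' with h | h
    · rw [h]
    · refine le_of_lt (lt_of_not_ge fun hba => ?_)
      have := α.toOrderHom.monotone hba
      rw [hαg, hαg] at this
      exact absurd this h.not_ge
  refine ⟨SimplexCategory.mkHom ⟨g, hmono⟩, ?_, by simp [hg]⟩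
  apply SimplexCategory.Hom.ext
  apply OrderHom.ext
  funext j
  exact hαg j

/-- Uniqueness part of Eilenberg–Zilber. -/
lemma ez_unique (X : SSet.{u}) {n p q : ℕ}
    (α : (⦋n⦌ : SimplexCategory) ⟶ ⦋p⦌) (hα : Epi α)
    (β : (⦋n⦌ : SimplexCategory) ⟶ ⦋q⦌) (hβ : Epi β)
    (x : X _⦋p⦌) (hx : X.Nondeg p x) (y : X _⦋q⦌) (hy : X.Nondeg q y)
    (hxy : X.map α.op x = X.map β.op y) :
    p = q ∧ HEq α β ∧ HEq x y := by
  have hαs : Function.Surjective α.toOrderHom := epi_iff_surjective.mp hα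
  have hβs : Function.Surjective β.toOrderHom := epi_iff_surjective.mp hβ
  -- any section of α composed with β is injective
  have key : ∀ s : (⦋p⦌ : SimplexCategory) ⟶ ⦋n⦌, s ≫ α = 𝟙 _ →
      x = X.map (s ≫ β).op y ∧ Function.Injective (s ≫ β).toOrderHom := by
    intro s hsα
    have h1 : x = X.map (s ≫ β).op y := by
      have : x = X.map s.op (X.map α.op x) := by
        rw [← FunctorToTypes.map_comp_apply, ← op_comp, hsα, op_id, FunctorToTypes.map_id_apply]
      rw [this, hxy, ← FunctorToTypes.map_comp_apply, ← op_comp]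
    exact ⟨h1, injective_of_nondeg X x hx (s ≫ β) y h1⟩
  have keyβ : ∀ s : (⦋q⦌ : SimplexCategory) ⟶ ⦋n⦌, s ≫ β = 𝟙 _ →
      Function.Injective (s ≫ α).toOrderHom := by
    intro s hsβ
    have h1 : y = X.map (s ≫ α).op x := by
      have : y = X.map s.op (X.map β.op y) := by
        rw [← FunctorToTypes.map_comp_apply, ← op_comp, hsβ, op_id, FunctorToTypes.map_id_apply]
      rw [this, ← hxy, ← FunctorToTypes.map_comp_apply, ← op_comp]
    exact injective_of_nondeg X y hy (s ≫ α) x h1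
  -- p = q
  obtain ⟨s₀, hs₀, -⟩ := exists_section α hαs 0
  obtain ⟨t₀, ht₀, -⟩ := exists_section β hβs 0
  have hpq : p = q := by
    have h1 : p ≤ q := by
      have := Fintype.card_le_of_injective _ (key s₀ hs₀).2
      simpa using this
    have h2 : q ≤ p := by
      have := Fintype.card_le_of_injective _ (keyβ t₀ ht₀)
      simpa using this
    exact le_antisymm h1 h2
  subst hpq
  refine ⟨rfl, heq_of_eq ?_, heq_of_eq ?_⟩
  · -- α = β : via sections through every point
    apply SimplexCategory.Hom.ext
    apply OrderHom.ext
    funext i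
    obtain ⟨s, hs, hsi⟩ := exists_section α hαs i
    have hinj := (key s hs).2
    have : s ≫ β = 𝟙 _ := by
      have hbij : Function.Bijective (Hom.toOrderHom (s ≫ β)).toFun :=
        (Finite.injective_iff_bijective).mp hinj
      have : IsIso (s ≫ β) := isIso_of_bijective hbij
      exact eq_id_of_isIso (s ≫ β)
    have h2 : β.toOrderHom (s.toOrderHom (α.toOrderHom i)) = α.toOrderHom i := by
      have h4 := congrArg (fun f => Hom.toOrderHom f (α.toOrderHom i)) this
      simpa using h4
    rw [hsi] at h2
    exact h2.symm
  · obtain ⟨s, hs, -⟩ := exists_section α hαs 0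
    have h1 := (key s hs).1
    have hinj := (key s hs).2
    have hid : s ≫ β = 𝟙 _ := by
      have hbij : Function.Bijective (Hom.toOrderHom (s ≫ β)).toFun :=
        (Finite.injective_iff_bijective).mp hinj
      have : IsIso (s ≫ β) := isIso_of_bijective hbij
      exact eq_id_of_isIso (s ≫ β)
    rw [h1, hid, op_id, FunctorToTypes.map_id_apply]




open SimplexCategory Limits Finset

variable {n p : ℕ}

/-- The jump set of a monotone map. -/
def jumps (f : Fin (n + 1) →o Fin (p + 1)) : Finset (Fin n) :=
  Finset.univ.filter (fun i => f i.castSucc < f i.succ)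

lemma mem_jumps (f : Fin (n + 1) →o Fin (p + 1)) (i : Fin n) :
    i ∈ jumps f ↔ f i.castSucc < f i.succ := by
  simp [jumps]

lemma apply_zero_eq (f : Fin (n + 1) →o Fin (p + 1)) (hf : Function.Surjective f) :
    f 0 = 0 := by
  obtain ⟨i, hi⟩ := hf 0
  exact le_antisymm (hi ▸ f.monotone (Fin.zero_le i)) (Fin.zero_le _)

lemma apply_last_eq (f : Fin (n + 1) →o Fin (p + 1)) (hf : Function.Surjective f) :
    f (Fin.last n) = Fin.last p := by
  obtain ⟨i, hi⟩ := hf (Fin.last p)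
  exact le_antisymm (Fin.le_last _) (hi ▸ f.monotone (Fin.le_last i))

lemma step_le (f : Fin (n + 1) →o Fin (p + 1)) (hf : Function.Surjective f) (i : Fin n) :
    (f i.succ : ℕ) ≤ (f i.castSucc : ℕ) + 1 := by
  by_contra h
  push_neg at h
  obtain ⟨l, hl⟩ := hf ⟨(f i.castSucc : ℕ) + 1, by omega⟩
  rcases le_or_gt l i.castSucc with hle | hlt
  · have h2 := f.monotone hle
    rw [hl] at h2
    simp only [Fin.le_def] at h2
    omega
  · have h3 : i.succ ≤ l := by
      simp only [Fin.lt_def, Fin.le_def, Fin.coe_castSucc, Fin.val_succ] at hlt ⊢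
      omega
    have h2 := f.monotone h3
    rw [hl] at h2
    simp only [Fin.le_def, Fin.val_succ] at h2
    omega

lemma val_eq_card_jumps (f : Fin (n + 1) →o Fin (p + 1)) (hf : Function.Surjective f)
    (i : Fin (n + 1)) :
    (f i : ℕ) = (Finset.univ.filter
      (fun j : Fin n => j.castSucc < i ∧ f j.castSucc < f j.succ)).card := by
  induction i using Fin.induction with
  | zero =>
    have h0 := apply_zero_eq f hf
    rw [h0]
    symm
    simp only [Fin.val_zero, Finset.card_eq_zero, Finset.filter_eq_empty_iff]
    intro j _
    rintro ⟨hj, -⟩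
    exact absurd hj (by simp [Fin.lt_def])
  | succ i ih =>
    have hsplit : (Finset.univ.filter
        (fun j : Fin n => j.castSucc < i.succ ∧ f j.castSucc < f j.succ)) =
        (Finset.univ.filter (fun j : Fin n => j.castSucc < i.castSucc ∧ f j.castSucc < f j.succ))
        ∪ (Finset.univ.filter (fun j : Fin n => j = i ∧ f j.castSucc < f j.succ)) := by
      ext j
      simp only [Finset.mem_filter, Finset.mem_union, Finset.mem_univ, true_and]
      by_cases hj : f j.castSucc < f j.succ
      · simp only [hj, and_true]
        simp only [Fin.lt_def, Fin.coe_castSucc, Fin.val_succ, Fin.ext_iff]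
        omega
      · simp [hj]
    have hdisj : Disjoint
        (Finset.univ.filter (fun j : Fin n => j.castSucc < i.castSucc ∧ f j.castSucc < f j.succ))
        (Finset.univ.filter (fun j : Fin n => j = i ∧ f j.castSucc < f j.succ)) := by
      rw [Finset.disjoint_left]
      intro j hj1 hj2
      simp only [Finset.mem_filter, Finset.mem_univ, true_and] at hj1 hj2
      obtain ⟨h1, -⟩ := hj1
      obtain ⟨rfl, -⟩ := hj2
      simp only [Fin.lt_def, Fin.coe_castSucc] at h1
      omega
    have hcard2 : (Finset.univ.filter
        (fun j : Fin n => j = i ∧ f j.castSucc < f j.succ)).card =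
        (if f i.castSucc < f i.succ then 1 else 0) := by
      by_cases hJ : f i.castSucc < f i.succ
      · rw [if_pos hJ]
        have heq : (Finset.univ.filter (fun j : Fin n => j = i ∧ f j.castSucc < f j.succ))
            = {i} := by
          ext j
          simp only [Finset.mem_filter, Finset.mem_univ, true_and, Finset.mem_singleton]
          constructor
          · rintro ⟨rfl, -⟩; rfl
          · rintro rfl; exact ⟨rfl, hJ⟩
        rw [heq, Finset.card_singleton]
      · rw [if_neg hJ]
        simp only [Finset.card_eq_zero, Finset.filter_eq_empty_iff]
        rintro j - ⟨rfl, h⟩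
        exact hJ h
    rw [hsplit, Finset.card_union_of_disjoint hdisj, ← ih, hcard2]
    have hstep := step_le f hf i
    have hmono : (f i.castSucc : ℕ) ≤ (f i.succ : ℕ) :=
      f.monotone (Fin.castSucc_le_succ i)
    by_cases hJ : f i.castSucc < f i.succ
    · rw [if_pos hJ]
      rw [Fin.lt_def] at hJ
      omega
    · rw [if_neg hJ]
      rw [Fin.lt_def, not_lt] at hJ
      omega

lemma card_jumps (f : Fin (n + 1) →o Fin (p + 1)) (hf : Function.Surjective f) :
    (jumps f).card = p := by
  have h := val_eq_card_jumps f hf (Fin.last n)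
  rw [apply_last_eq f hf] at h
  simp only [Fin.val_last] at h
  have hset : (Finset.univ.filter (fun i : Fin n => f i.castSucc < f i.succ)) =
      (Finset.univ.filter
        (fun j : Fin n => j.castSucc < Fin.last n ∧ f j.castSucc < f j.succ)) := by
    apply Finset.filter_congr
    intro j _
    have hj : j.castSucc < Fin.last n := by
      simp [Fin.lt_def, j.isLt]
    simp [hj]
  rw [jumps, hset]
  exact h.symm

/-- The monotone map associated to a set of jumps. -/
def ofSet (s : Finset (Fin n)) (hs : s.card = p) : Fin (n + 1) →o Fin (p + 1) where
  toFun i := ⟨(s.filter (fun j : Fin n => (j : ℕ) < (i : ℕ))).card, by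
    have h := Finset.card_filter_le s (fun j : Fin n => (j : ℕ) < (i : ℕ))
    omega⟩
  monotone' i i' h := by
    simp only [Fin.mk_le_mk]
    apply Finset.card_le_card
    apply Finset.monotone_filter_right
    intro j hj
    rw [Fin.le_def] at h
    omega

lemma ofSet_val (s : Finset (Fin n)) (hs : s.card = p) (i : Fin (n + 1)) :
    ((ofSet s hs) i : ℕ) = (s.filter (fun j : Fin n => (j : ℕ) < (i : ℕ))).card := rfl

lemma ofSet_succ_val (s : Finset (Fin n)) (hs : s.card = p) (i : Fin n) :
    ((ofSet s hs) i.succ : ℕ) = ((ofSet s hs) i.castSucc : ℕ) + (if i ∈ s then 1 else 0) := by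
  rw [ofSet_val, ofSet_val]
  simp only [Fin.val_succ, Fin.coe_castSucc]
  have hsplit : s.filter (fun j : Fin n => (j : ℕ) < (i : ℕ) + 1) =
      s.filter (fun j : Fin n => (j : ℕ) < (i : ℕ)) ∪ s.filter (fun j : Fin n => j = i) := by
    ext j
    simp only [Finset.mem_union, Finset.mem_filter, Fin.ext_iff]
    constructor
    · rintro ⟨hjs, hlt⟩
      rcases Nat.lt_succ_iff_lt_or_eq.mp hlt with h | h
      · exact Or.inl ⟨hjs, h⟩
      · exact Or.inr ⟨hjs, h⟩
    · rintro (⟨hjs, h⟩ | ⟨hjs, h⟩)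
      · exact ⟨hjs, Nat.lt_succ_of_lt h⟩
      · exact ⟨hjs, by omega⟩
  have hdisj : Disjoint (s.filter (fun j : Fin n => (j : ℕ) < (i : ℕ))) (s.filter (fun j : Fin n => j = i)) := by
    rw [Finset.disjoint_left]
    intro j hj1 hj2
    simp only [Finset.mem_filter] at hj1 hj2
    obtain ⟨-, h1⟩ := hj1
    obtain ⟨-, rfl⟩ := hj2
    omega
  rw [hsplit, Finset.card_union_of_disjoint hdisj, Finset.filter_eq']
  by_cases h : i ∈ s
  · rw [if_pos h, if_pos h, Finset.card_singleton]
  · rw [if_neg h, if_neg h, Finset.card_empty]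

lemma ofSet_zero (s : Finset (Fin n)) (hs : s.card = p) : (ofSet s hs) 0 = 0 := by
  apply Fin.ext
  rw [ofSet_val]
  simp

lemma ofSet_last (s : Finset (Fin n)) (hs : s.card = p) :
    (ofSet s hs) (Fin.last n) = Fin.last p := by
  apply Fin.ext
  rw [ofSet_val]
  simp only [Fin.val_last]
  rw [Finset.filter_true_of_mem (fun j _ => j.isLt), hs]

lemma surj_of_steps (f : Fin (n + 1) →o Fin (p + 1)) (h0 : f 0 = 0)
    (hl : f (Fin.last n) = Fin.last p)
    (hstep : ∀ i : Fin n, (f i.succ : ℕ) ≤ (f i.castSucc : ℕ) + 1) :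
    Function.Surjective f := by
  intro b
  by_contra hb
  push_neg at hb
  have hne : (Finset.univ.filter (fun i : Fin (n + 1) => b ≤ f i)).Nonempty :=
    ⟨Fin.last n, by simp [hl, Fin.le_last]⟩
  set i₀ := (Finset.univ.filter (fun i : Fin (n + 1) => b ≤ f i)).min' hne with hi₀def
  have hi₀ : b ≤ f i₀ := (Finset.mem_filter.mp (Finset.min'_mem _ hne)).2
  have hlt : b < f i₀ := lt_of_le_of_ne hi₀ (fun h => hb i₀ h.symm)
  have hi₀0 : i₀ ≠ 0 := by
    intro h
    rw [h, h0] at hlt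
    exact absurd hlt (not_lt.mpr (Fin.zero_le b))
  obtain ⟨j, hj⟩ := Fin.eq_succ_of_ne_zero hi₀0
  have hnb : ¬ b ≤ f j.castSucc := by
    intro h
    have hmem : j.castSucc ∈ Finset.univ.filter (fun i : Fin (n + 1) => b ≤ f i) := by
      simp [h]
    have h2 : i₀ ≤ j.castSucc := Finset.min'_le _ _ hmem
    have h3 : j.castSucc < i₀ := by
      rw [hj]
      exact Fin.castSucc_lt_succ
    exact absurd h3 (not_lt.mpr h2)
  rw [not_le, Fin.lt_def] at hnb
  rw [Fin.lt_def] at hlt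
  have h2 := hstep j
  have h4 : f j.succ = f i₀ := by rw [hj]
  rw [h4] at h2
  omega

lemma ofSet_surjective (s : Finset (Fin n)) (hs : s.card = p) :
    Function.Surjective (ofSet s hs) := by
  apply surj_of_steps _ (ofSet_zero s hs) (ofSet_last s hs)
  intro i
  rw [ofSet_succ_val]
  by_cases h : i ∈ s <;> simp [h]

lemma jumps_ofSet (s : Finset (Fin n)) (hs : s.card = p) : jumps (ofSet s hs) = s := by
  ext i
  simp only [jumps, Finset.mem_filter]
  simp only [Finset.mem_univ, true_and]
  rw [Fin.lt_def]
  rw [ofSet_succ_val]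
  by_cases h : i ∈ s <;> simp [h]

lemma ofSet_jumps (f : Fin (n + 1) →o Fin (p + 1)) (hf : Function.Surjective f) :
    ofSet (jumps f) (card_jumps f hf) = f := by
  apply OrderHom.ext
  funext i
  apply Fin.ext
  rw [ofSet_val, val_eq_card_jumps f hf i]
  congr 1
  simp only [jumps]
  rw [Finset.filter_filter]
  apply Finset.filter_congr
  intro j _
  constructor
  · rintro ⟨h1, h2⟩
    exact ⟨by simpa [Fin.lt_def] using h2, h1⟩
  · rintro ⟨h1, h2⟩
    exact ⟨h2, by simpa [Fin.lt_def] using h1⟩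

/-- Monotone surjections `[n] ↠ [p]` correspond to `p`-element subsets of `Fin n`. -/
noncomputable def epiEquiv (n p : ℕ) :
    {α : (⦋n⦌ : SimplexCategory) ⟶ ⦋p⦌ // Epi α} ≃ {s : Finset (Fin n) // s.card = p} where
  toFun α := ⟨jumps α.1.toOrderHom, card_jumps _ (epi_iff_surjective.mp α.2)⟩
  invFun s := ⟨SimplexCategory.mkHom (ofSet s.1 s.2),
    epi_iff_surjective.mpr (ofSet_surjective s.1 s.2)⟩
  left_inv α := by
    apply Subtype.ext
    apply SimplexCategory.Hom.ext
    exact ofSet_jumps α.1.toOrderHom (epi_iff_surjective.mp α.2)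
  right_inv s := Subtype.ext (jumps_ofSet s.1 s.2)

lemma card_epis (n p : ℕ) :
    Nat.card {α : (⦋n⦌ : SimplexCategory) ⟶ ⦋p⦌ // Epi α} = n.choose p := by
  classical
  rw [Nat.card_congr (epiEquiv n p), Nat.card_eq_fintype_card, Fintype.card_finset_len,
    Fintype.card_fin]





/-- The levelwise description of the product of simplicial sets. -/
noncomputable def prodEquiv (K L : SSet.{u}) (m : SimplexCategoryᵒᵖ) :
    (K ⨯ L).obj m ≃ K.obj m × L.obj m :=
  ((PreservesLimitPair.iso ((evaluation _ _).obj m) K L) ≪≫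
    Types.binaryProductIso _ _).toEquiv

lemma prodEquiv_apply (K L : SSet.{u}) (m : SimplexCategoryᵒᵖ) (z : (K ⨯ L).obj m) :
    prodEquiv K L m z =
      ((prod.fst : K ⨯ L ⟶ K).app m z, (prod.snd : K ⨯ L ⟶ L).app m z) := by
  have h1 : (PreservesLimitPair.iso ((evaluation _ _).obj m) K L).hom ≫
      (Types.binaryProductIso (K.obj m) (L.obj m)).hom ≫ TypeCat.ofHom _root_.Prod.fst =
      (prod.fst : K ⨯ L ⟶ K).app m := by
    rw [Types.binaryProductIso_hom_comp_fst, PreservesLimitPair.iso_hom]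
    have h := prodComparison_fst ((evaluation SimplexCategoryᵒᵖ (Type u)).obj m) K L
    simpa using h
  have h2 : (PreservesLimitPair.iso ((evaluation _ _).obj m) K L).hom ≫
      (Types.binaryProductIso (K.obj m) (L.obj m)).hom ≫ TypeCat.ofHom _root_.Prod.snd =
      (prod.snd : K ⨯ L ⟶ L).app m := by
    rw [Types.binaryProductIso_hom_comp_snd, PreservesLimitPair.iso_hom]
    have h := prodComparison_snd ((evaluation SimplexCategoryᵒᵖ (Type u)).obj m) K L
    simpa using h
  have e1 := ConcreteCategory.congr_hom h1 z
  have e2 := ConcreteCategory.congr_hom h2 z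
  simp only [types_comp_apply] at e1 e2
  apply Prod.ext
  · exact e1
  · exact e2

lemma prodEquiv_naturality (K L : SSet.{u}) {m m' : SimplexCategoryᵒᵖ} (f : m ⟶ m')
    (z : (K ⨯ L).obj m) :
    prodEquiv K L m' ((K ⨯ L).map f z) =
      (K.map f (prodEquiv K L m z).1, L.map f (prodEquiv K L m z).2) := by
  rw [prodEquiv_apply, prodEquiv_apply]
  apply Prod.ext
  · exact FunctorToTypes.naturality (prod.fst : K ⨯ L ⟶ K) f z
  · exact FunctorToTypes.naturality (prod.snd : K ⨯ L ⟶ L) f z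

/-- The "binomial coefficient" polynomial combination. -/
noncomputable def chiPoly (f : ℕ → ℕ) (T : ℕ) : Polynomial ℚ :=
  ∑ p ∈ Finset.range T, Polynomial.C ((f p : ℚ) / p.factorial) * descPochhammer ℚ p

lemma chiPoly_eval_nat (f : ℕ → ℕ) (T n : ℕ) :
    (chiPoly f T).eval (n : ℚ) = ∑ p ∈ Finset.range T, (f p : ℚ) * (n.choose p : ℚ) := by
  rw [chiPoly, Polynomial.eval_finset_sum]
  apply Finset.sum_congr rfl
  intro p _
  rw [Polynomial.eval_mul, Polynomial.eval_C, descPochhammer_eval_eq_descFactorial,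
    Nat.descFactorial_eq_factorial_mul_choose]
  have hp : (p.factorial : ℚ) ≠ 0 := Nat.cast_ne_zero.mpr p.factorial_ne_zero
  push_cast
  field_simp

lemma descPochhammer_eval_neg_one (p : ℕ) :
    (descPochhammer ℚ p).eval (-1 : ℚ) = (-1) ^ p * p.factorial := by
  induction p with
  | zero => simp
  | succ p ih =>
    rw [descPochhammer_succ_eval, ih]
    push_cast [Nat.factorial_succ]
    ring

lemma chiPoly_eval_neg_one (f : ℕ → ℕ) (T : ℕ) :
    (chiPoly f T).eval (-1 : ℚ) = ∑ p ∈ Finset.range T, (-1 : ℚ) ^ p * (f p : ℚ) := by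
  rw [chiPoly, Polynomial.eval_finset_sum]
  apply Finset.sum_congr rfl
  intro p _
  rw [Polynomial.eval_mul, Polynomial.eval_C, descPochhammer_eval_neg_one]
  have hp : (p.factorial : ℚ) ≠ 0 := Nat.cast_ne_zero.mpr p.factorial_ne_zero
  field_simp

lemma nat_card_sigma {m : ℕ} (G : Fin m → Type*) [h : ∀ i, Finite (G i)] :
    Nat.card (Σ i, G i) = ∑ i, Nat.card (G i) := by
  classical
  haveI : ∀ i, Fintype (G i) := fun i => Fintype.ofFinite _
  calc Nat.card (Σ i, G i) = Fintype.card (Σ i, G i) := Nat.card_eq_fintype_card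
    _ = ∑ i, Fintype.card (G i) := Fintype.card_sigma
    _ = ∑ i, Nat.card (G i) := by
        apply Finset.sum_congr rfl
        intro i _
        rw [Nat.card_eq_fintype_card]



/-- The number of nondegenerate `p`-simplices. -/
noncomputable def NN (X : SSet.{u}) (p : ℕ) : ℕ :=
  Nat.card {σ : X.obj (op (SimplexCategory.mk p)) // X.Nondeg p σ}

abbrev EZT (X : SSet.{u}) (n : ℕ) : Type _ :=
  Σ p : Fin (n + 1), {α : (⦋n⦌ : SimplexCategory) ⟶ ⦋(p : ℕ)⦌ // Epi α} ×
    {x : X.obj (op (SimplexCategory.mk (p : ℕ))) // X.Nondeg (p : ℕ) x}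

def ezMap (X : SSet.{u}) (n : ℕ) : EZT X n → X _⦋n⦌ := fun z => X.map z.2.1.1.op z.2.2.1

lemma ezMap_bijective (X : SSet.{u}) (n : ℕ) : Function.Bijective (ezMap X n) := by
  constructor
  · rintro ⟨p, α, x⟩ ⟨q, β, y⟩ h
    obtain ⟨h1, h2, h3⟩ := ez_unique X α.1 α.2 β.1 β.2 x.1 x.2 y.1 y.2 h
    obtain rfl : p = q := Fin.ext h1
    obtain rfl : α = β := Subtype.ext (eq_of_heq h2)
    obtain rfl : x = y := Subtype.ext (eq_of_heq h3)
    rfl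
  · intro x
    obtain ⟨p, hpn, α, hα, y, hy, hxy⟩ := exists_ez X n x
    exact ⟨⟨⟨p, Nat.lt_succ_of_le hpn⟩, ⟨α, hα⟩, ⟨y, hy⟩⟩, hxy.symm⟩

lemma finite_nondeg (X : SSet.{u}) (hfin : ∀ p : ℕ, {σ : X _⦋p⦌ | X.Nondeg p σ}.Finite) (p : ℕ) :
    Finite {σ : X _⦋p⦌ // X.Nondeg p σ} :=
  (hfin p).to_subtype

lemma finite_level (X : SSet.{u}) (hfin : ∀ p : ℕ, {σ : X _⦋p⦌ | X.Nondeg p σ}.Finite) (n : ℕ) :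
    Finite (X _⦋n⦌) := by
  haveI : ∀ p : ℕ, Finite {σ : X _⦋p⦌ // X.Nondeg p σ} := finite_nondeg X hfin
  exact Finite.of_surjective (ezMap X n) (ezMap_bijective X n).2

lemma card_level_eq (X : SSet.{u}) (hfin : ∀ p : ℕ, {σ : X _⦋p⦌ | X.Nondeg p σ}.Finite) (n : ℕ) :
    Nat.card (X _⦋n⦌) = ∑ p ∈ Finset.range (n + 1), n.choose p * NN X p := by
  haveI : ∀ p : ℕ, Finite {σ : X _⦋p⦌ // X.Nondeg p σ} := finite_nondeg X hfin
  rw [← Nat.card_congr (Equiv.ofBijective _ (ezMap_bijective X n))]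
  rw [nat_card_sigma]
  rw [← Fin.sum_univ_eq_sum_range (fun p => n.choose p * NN X p) (n + 1)]
  apply Finset.sum_congr rfl
  intro p _
  rw [Nat.card_prod, card_epis, NN]

lemma NN_eq_zero (X : SSet.{u}) {T : ℕ} (hT : ∀ n ≥ T, ∀ σ : X _⦋n⦌, ¬ X.Nondeg n σ)
    {p : ℕ} (hp : T ≤ p) : NN X p = 0 := by
  haveI : IsEmpty {σ : X.obj (op (SimplexCategory.mk p)) // X.Nondeg p σ} :=
    ⟨fun x => hT p hp x.1 x.2⟩
  exact Nat.card_of_isEmpty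

lemma chi_eq (X : SSet.{u}) (T : ℕ) (hT : ∀ n ≥ T, ∀ σ : X _⦋n⦌, ¬ X.Nondeg n σ) :
    X.chi = ∑ n ∈ Finset.range T, (-1 : ℤ) ^ n * (NN X n : ℤ) := by
  rw [SSet.chi]
  apply finsum_eq_sum_of_support_subset
  intro n hn
  simp only [Function.mem_support, ne_eq] at hn
  simp only [Finset.coe_range, Set.mem_Iio]
  by_contra h
  push_neg at h
  apply hn
  have h0 : NN X n = 0 := NN_eq_zero X hT h
  rw [NN] at h0
  rw [h0]
  simp

lemma card_eq_poly (X : SSet.{u}) (hfin : ∀ p : ℕ, {σ : X _⦋p⦌ | X.Nondeg p σ}.Finite)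
    {T : ℕ} (hT : ∀ n ≥ T, ∀ σ : X _⦋n⦌, ¬ X.Nondeg n σ) (n : ℕ) :
    (Nat.card (X _⦋n⦌) : ℚ) = (chiPoly (NN X) T).eval (n : ℚ) := by
  rw [chiPoly_eval_nat, card_level_eq X hfin n]
  push_cast
  have h1 : ∑ p ∈ Finset.range (n + 1), ((n.choose p : ℚ) * (NN X p : ℚ))
      = ∑ p ∈ Finset.range (max (n + 1) T), ((n.choose p : ℚ) * (NN X p : ℚ)) := by
    apply Finset.sum_subset (Finset.range_subset_range.mpr (le_max_left _ _))
    intro x _ hx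
    have hnx : n < x := by
      simp only [Finset.mem_range] at hx
      omega
    rw [Nat.choose_eq_zero_of_lt hnx]
    simp
  have h2 : ∑ p ∈ Finset.range T, ((NN X p : ℚ) * (n.choose p : ℚ))
      = ∑ p ∈ Finset.range (max (n + 1) T), ((NN X p : ℚ) * (n.choose p : ℚ)) := by
    apply Finset.sum_subset (Finset.range_subset_range.mpr (le_max_right _ _))
    intro x _ hx
    have hTx : T ≤ x := by
      simp only [Finset.mem_range] at hx
      omega
    rw [NN_eq_zero X hT hTx]
    simp
  rw [h1, h2]
  apply Finset.sum_congr rfl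
  intro p _
  ring

/-- vanishing of nondegenerate simplices of a product in high degrees -/
lemma prod_vanish (K L : SSet.{u}) {TK TL : ℕ}
    (hTK : ∀ n ≥ TK, ∀ σ : K _⦋n⦌, ¬ K.Nondeg n σ)
    (hTL : ∀ n ≥ TL, ∀ σ : L _⦋n⦌, ¬ L.Nondeg n σ)
    (r : ℕ) (hr : TK + TL ≤ r) (z : (K ⨯ L) _⦋r⦌) : ¬ (K ⨯ L).Nondeg r z := by
  intro hz
  obtain ⟨p, hpr, α, hα, x₀, hx₀, hx⟩ := exists_ez K r ((prodEquiv K L (op ⦋r⦌)) z).1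
  obtain ⟨q, hqr, β, hβ, y₀, hy₀, hy⟩ := exists_ez L r ((prodEquiv K L (op ⦋r⦌)) z).2
  have hp : p < TK := by
    by_contra h
    push_neg at h
    exact hTK p h x₀ hx₀
  have hq : q < TL := by
    by_contra h
    push_neg at h
    exact hTL q h y₀ hy₀
  obtain ⟨m, rfl⟩ : ∃ m, r = m + 1 := ⟨r - 1, by omega⟩
  have hαs : Function.Surjective α.toOrderHom := epi_iff_surjective.mp hα
  have hβs : Function.Surjective β.toOrderHom := epi_iff_surjective.mp hβ
  have hcα := card_jumps (n := m + 1) (p := p) α.toOrderHom hαs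
  have hcβ := card_jumps (n := m + 1) (p := q) β.toOrderHom hβs
  have hex : ∃ i : Fin (m + 1), i ∉ jumps (n := m + 1) (p := p) α.toOrderHom ∧
      i ∉ jumps (n := m + 1) (p := q) β.toOrderHom := by
    by_contra h
    push_neg at h
    have hsub : (Finset.univ : Finset (Fin (m + 1))) ⊆
        jumps (n := m + 1) (p := p) α.toOrderHom ∪ jumps (n := m + 1) (p := q) β.toOrderHom := by
      intro i _
      rw [Finset.mem_union]
      by_cases hi : i ∈ jumps (n := m + 1) (p := p) α.toOrderHom
      · exact Or.inl hi
      · exact Or.inr (h i hi)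
    have hcard := Finset.card_le_card hsub
    rw [Finset.card_univ, Fintype.card_fin] at hcard
    have hun := Finset.card_union_le
      (jumps (n := m + 1) (p := p) α.toOrderHom) (jumps (n := m + 1) (p := q) β.toOrderHom)
    rw [hcα, hcβ] at hun
    omega
  obtain ⟨i, hiα, hiβ⟩ := hex
  rw [mem_jumps] at hiα hiβ
  have heqα : α.toOrderHom i.castSucc = α.toOrderHom i.succ :=
    le_antisymm (α.toOrderHom.monotone (Fin.castSucc_le_succ i)) (not_lt.mp hiα)
  have heqβ : β.toOrderHom i.castSucc = β.toOrderHom i.succ :=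
    le_antisymm (β.toOrderHom.monotone (Fin.castSucc_le_succ i)) (not_lt.mp hiβ)
  obtain ⟨α', hα'⟩ := eq_σ_comp_of_not_injective' α i heqα
  obtain ⟨β', hβ'⟩ := eq_σ_comp_of_not_injective' β i heqβ
  apply hz
  refine ⟨i, (prodEquiv K L (op ⦋m⦌)).symm (K.map α'.op x₀, L.map β'.op y₀), ?_⟩
  apply (prodEquiv K L (op ⦋m + 1⦌)).injective
  rw [prodEquiv_naturality, Equiv.apply_symm_apply]
  have e1 : K.map (SimplexCategory.σ i).op (K.map α'.op x₀) = K.map α.op x₀ := by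
    rw [← FunctorToTypes.map_comp_apply, ← op_comp, ← hα']
  have e2 : L.map (SimplexCategory.σ i).op (L.map β'.op y₀) = L.map β.op y₀ := by
    rw [← FunctorToTypes.map_comp_apply, ← op_comp, ← hβ']
  rw [e1, e2, ← hx, ← hy]

theorem chi_prod_aux (K L : SSet.{u}) (hK : K.FinNondeg) (hL : L.FinNondeg) :
    SSet.FinNondeg (K ⨯ L) ∧ SSet.chi (K ⨯ L) = K.chi * L.chi := by
  classical
  obtain ⟨hKfin, TK, hTK⟩ := hK
  obtain ⟨hLfin, TL, hTL⟩ := hL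
  have hZlev : ∀ r : ℕ, Finite ((K ⨯ L) _⦋r⦌) := by
    intro r
    haveI := finite_level K hKfin r
    haveI := finite_level L hLfin r
    exact Finite.of_equiv _ (prodEquiv K L (op ⦋r⦌)).symm
  have hZfin : ∀ r : ℕ, {σ : (K ⨯ L) _⦋r⦌ | (K ⨯ L).Nondeg r σ}.Finite := by
    intro r
    haveI := hZlev r
    exact Set.toFinite _
  have hZbound : ∀ n ≥ TK + TL, ∀ σ : (K ⨯ L) _⦋n⦌, ¬ (K ⨯ L).Nondeg n σ :=
    fun n hn σ => prod_vanish K L hTK hTL n hn σ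
  refine ⟨⟨hZfin, TK + TL, hZbound⟩, ?_⟩
  -- polynomial identity
  have hroot : ∀ n : ℕ,
      (chiPoly (NN K) TK * chiPoly (NN L) TL - chiPoly (NN (K ⨯ L)) (TK + TL)).eval (n : ℚ)
        = 0 := by
    intro n
    rw [Polynomial.eval_sub, Polynomial.eval_mul]
    rw [← card_eq_poly K hKfin hTK n, ← card_eq_poly L hLfin hTL n,
      ← card_eq_poly (K ⨯ L) hZfin hZbound n]
    rw [← Nat.cast_mul, ← Nat.card_prod]
    rw [Nat.card_congr (prodEquiv K L (op ⦋n⦌))]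
    simp
  have hzero : chiPoly (NN K) TK * chiPoly (NN L) TL - chiPoly (NN (K ⨯ L)) (TK + TL) = 0 := by
    apply Polynomial.eq_zero_of_infinite_isRoot
    apply Set.infinite_of_injective_forall_mem (f := fun n : ℕ => (n : ℚ))
      (Nat.cast_injective)
    intro n
    exact hroot n
  have heval := congrArg (Polynomial.eval (-1 : ℚ)) hzero
  rw [Polynomial.eval_sub, Polynomial.eval_mul, Polynomial.eval_zero, sub_eq_zero] at heval
  rw [chiPoly_eval_neg_one, chiPoly_eval_neg_one, chiPoly_eval_neg_one] at heval
  have hchiK := chi_eq K TK hTK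
  have hchiL := chi_eq L TL hTL
  have hchiZ := chi_eq (K ⨯ L) (TK + TL) hZbound
  have : ((K ⨯ L).chi : ℚ) = (K.chi : ℚ) * (L.chi : ℚ) := by
    rw [hchiK, hchiL, hchiZ]
    push_cast
    rw [heval]
  exact_mod_cast this



end ChiProd

/-- The combinatorial Euler characteristic is multiplicative on products of
simplicial sets, which again have finitely many nondegenerate simplices. -/
theorem chi_prod (K L : SSet) (hK : K.FinNondeg) (hL : L.FinNondeg) :
    SSet.FinNondeg (K ⨯ L) ∧ SSet.chi (K ⨯ L) = K.chi * L.chi := by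
  exact ChiProd.chi_prod_aux K L hK hL
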